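/- Let F be a flasque cosheaf on a T0 Alexandroff space X, i.e., F(V ⊆ U) : F(V) → F(U) is injective for all open V ⊆ U. Then the cosheaf homology H_n(X; F), computed from any projective resolution P_• → F → 0 by taking homology of the chain complex ⋯ → P_n(X) → P_{n-1}(X) → ⋯ → P_0(X) → 0, vanishes for all n ≥ 1. -/

import Mathlib

open CategoryTheory CategoryTheory.Limits TopologicalSpace


/-- The minimal open set containing `x`. -/
def minOpen {X : Type} [TopologicalSpace X] (x : X) : Set X :=
  ⋂₀ {U : Set X | IsOpen U ∧ x ∈ U}

lemma isOpen_minOpen {X : Type} [TopologicalSpace X] [AlexandrovDiscrete X] (x : X) :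
    IsOpen (minOpen x) :=
  isOpen_sInter fun _ h => h.1

/-- The minimal open set containing `x`, as an element of `Opens X`. -/
def Uo {X : Type} [TopologicalSpace X] [AlexandrovDiscrete X] (x : X) : Opens X :=
  ⟨minOpen x, isOpen_minOpen x⟩

lemma minOpen_le {X : Type} [TopologicalSpace X] {x : X} {U : Opens X} (hx : x ∈ U) :
    minOpen x ⊆ (U : Set X) :=
  Set.sInter_subset_of_mem ⟨U.isOpen, hx⟩

/-- A precosheaf of abelian groups on `X`: a covariant functor on open sets. -/
abbrev Precosheaf (X : Type) [TopologicalSpace X] := Opens X ⥤ AddCommGrpCat.{0}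

variable {X : Type} [TopologicalSpace X]

/-- The nerve of an open cover: the nonempty finite intersections of its members. -/
def nerveSet (𝒰 : Set (Opens X)) : Set (Opens X) :=
  {V | (V : Set X).Nonempty ∧ ∃ s : Finset (Opens X), ↑s ⊆ 𝒰 ∧ s.Nonempty ∧ V = s.inf id}

lemma nerve_le {𝒰 : Set (Opens X)} {U : Opens X} (h : ∀ V ∈ 𝒰, V ≤ U)
    {V : Opens X} (hV : V ∈ nerveSet 𝒰) : V ≤ U := by
  obtain ⟨-, s, hs, ⟨w, hw⟩, rfl⟩ := hV
  exact le_trans (Finset.inf_le hw) (h w (hs hw))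

/-- The diagram of a precosheaf over the nerve of an open cover. -/
def nerveDiagram (F : Precosheaf X) (𝒰 : Set (Opens X)) :
    ObjectProperty.FullSubcategory (· ∈ nerveSet 𝒰) ⥤ AddCommGrpCat.{0} :=
  ObjectProperty.ι (· ∈ nerveSet 𝒰) ⋙ F

/-- The canonical cocone on the nerve diagram with apex `F(U)`. -/
def coverCocone (F : Precosheaf X) (U : Opens X) (𝒰 : Set (Opens X))
    (h : ∀ V ∈ 𝒰, V ≤ U) : Cocone (nerveDiagram F 𝒰) where
  pt := F.obj U
  ι :=
    { app := fun V => F.map (homOfLE (nerve_le h V.2))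
      naturality := fun a b f => by
        dsimp [nerveDiagram]
        rw [Category.comp_id, ← F.map_comp]
        rfl }

/-- A precosheaf is a cosheaf if for every open `U` and every open cover `𝒰` of `U`, the
canonical map from the colimit over the nerve of `𝒰` to `F(U)` is an isomorphism, i.e.
`F(U)` is the colimit of the nerve diagram. -/
def IsCosheaf (F : Precosheaf X) : Prop :=
  ∀ (U : Opens X) (𝒰 : Set (Opens X)) (h𝒰 : ∀ V ∈ 𝒰, V ≤ U), U ≤ sSup 𝒰 →
    Nonempty (IsColimit (coverCocone F U 𝒰 h𝒰))

/-- The Alexandroff space `X(P)` of a poset `P`: open sets are the up-sets. -/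
def upTop (P : Type) [Preorder P] : TopologicalSpace P where
  IsOpen := IsUpperSet
  isOpen_univ := isUpperSet_univ
  isOpen_inter _ _ := IsUpperSet.inter
  isOpen_sUnion _ h := isUpperSet_sUnion h

variable {P : Type} [PartialOrder P]

/-- The diagram of a cellular cosheaf `F : P ⥤ Ab` over the subposet `U ⊆ P`. -/
def openDiagram (F : P ⥤ AddCommGrpCat.{0}) (U : Set P) :
    ObjectProperty.FullSubcategory (· ∈ U) ⥤ AddCommGrpCat.{0} :=
  ObjectProperty.ι (· ∈ U) ⋙ F

noncomputable def hatMap (F : P ⥤ AddCommGrpCat.{0}) {U V : Set P} (h : U ⊆ V) :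
    colimit (openDiagram F U) ⟶ colimit (openDiagram F V) :=
  colimit.pre (openDiagram F V) (ObjectProperty.ιOfLE fun _ hx => h hx)

lemma hatMap_ι (F : P ⥤ AddCommGrpCat.{0}) {U V : Set P} (h : U ⊆ V)
    (j : ObjectProperty.FullSubcategory (· ∈ U)) :
    colimit.ι (openDiagram F U) j ≫ hatMap F h =
      colimit.ι (openDiagram F V) ⟨j.1, h j.2⟩ := by
  exact colimit.ι_pre (openDiagram F V) (ObjectProperty.ιOfLE fun _ hx => h hx) j

/-- The cosheaf `F̂` on `X(P)` associated to a cellular cosheaf `F : P ⥤ Ab`,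
with `F̂(U) = colim_{x ∈ U} F(x)`. -/
noncomputable def hatF (F : P ⥤ AddCommGrpCat.{0}) :
    @TopologicalSpace.Opens P (upTop P) ⥤ AddCommGrpCat.{0} where
  obj U := colimit (openDiagram F (U : Set P))
  map {U V} h := hatMap F h.le
  map_id U := by
    apply colimit.hom_ext
    intro j
    erw [hatMap_ι]
    simp
  map_comp {U V W} f g := by
    apply colimit.hom_ext
    intro j
    first
      | exact (hatMap_ι F _ j).trans ((hatMap_ι F _ (⟨j.1, f.le j.2⟩ : ObjectProperty.FullSubcategory (· ∈ (V : Set P)))).symm.trans ((congrArg (· ≫ hatMap F _) (hatMap_ι F _ j)).symm.trans (Category.assoc _ _ _)))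
      | (rw [← Category.assoc]; erw [hatMap_ι, hatMap_ι, hatMap_ι])
      | simp only [← Category.assoc, hatMap_ι]

section Resolutions
variable {X : Type} [TopologicalSpace X] [AlexandrovDiscrete X]

/-- A cosheaf `Q` is projective if every homomorphism from `Q` to a cosheaf lifts along
every homomorphism of cosheaves which is surjective on costalks. -/
def IsProjectiveCosheaf (Q : Precosheaf X) : Prop :=
  ∀ (F G : Precosheaf X), IsCosheaf F → IsCosheaf G →
    ∀ (α : Q ⟶ F) (β : G ⟶ F), (∀ x : X, Function.Surjective (β.app (Uo x))) →
      ∃ γ : Q ⟶ G, γ ≫ β = α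

/-- A projective resolution `⋯ → P_n → ⋯ → P_0 → F → 0` of a cosheaf `F`:
a complex of projective cosheaves whose sequences of costalks are exact. -/
structure ProjRes (F : Precosheaf X) where
  P : ℕ → Precosheaf X
  d : ∀ n, P (n + 1) ⟶ P n
  ε : P 0 ⟶ F
  cosheaf : ∀ n, IsCosheaf (P n)
  projective : ∀ n, IsProjectiveCosheaf (P n)
  dd : ∀ n, d (n + 1) ≫ d n = 0
  dε : d 0 ≫ ε = 0
  exact_ε : ∀ x : X, Function.Surjective (ε.app (Uo x))
  exact_0 : ∀ x : X, Function.Exact ((d 0).app (Uo x)) (ε.app (Uo x))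
  exact_d : ∀ n, ∀ x : X, Function.Exact ((d (n + 1)).app (Uo x)) ((d n).app (Uo x))

end Resolutions


section Helpers

variable {X : Type} [TopologicalSpace X] [AlexandrovDiscrete X]

lemma mem_Uo_self (x : X) : x ∈ Uo x := by
  intro S hS
  exact hS.2

lemma Uo_le {x : X} {U : Opens X} (hx : x ∈ U) : Uo x ≤ U :=
  minOpen_le hx

lemma Uo_mono {x y : X} (h : y ∈ Uo x) : Uo y ≤ Uo x :=
  minOpen_le (U := Uo x) h

lemma pmap_pmap (G : Precosheaf X) {V W U : Opens X} (h : V ≤ W) (h' : W ≤ U) (a : G.obj V) :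
    G.map (homOfLE h') (G.map (homOfLE h) a) = G.map (homOfLE (h.trans h')) a := by
  rw [← CategoryTheory.comp_apply, ← Functor.map_comp, homOfLE_comp]

lemma nerve_single {𝒰 : Set (Opens X)} {W : Opens X} (hW : W ∈ 𝒰)
    (hne : (W : Set X).Nonempty) : W ∈ nerveSet 𝒰 := by
  refine ⟨hne, {W}, by simpa using hW, ⟨W, by simp⟩, by simp⟩

lemma nerve_inter {𝒰 : Set (Opens X)} {V W : Opens X} (hV : V ∈ nerveSet 𝒰)
    (hW : W ∈ nerveSet 𝒰) (hne : ((V ⊓ W : Opens X) : Set X).Nonempty) :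
    V ⊓ W ∈ nerveSet 𝒰 := by
  obtain ⟨-, s, hs, hsne, rfl⟩ := hV
  obtain ⟨-, t, ht, htne, rfl⟩ := hW
  classical
  refine ⟨hne, s ∪ t, ?_, ?_, ?_⟩
  · intro Z hZ
    rcases Finset.mem_union.mp (by exact_mod_cast hZ) with h | h
    · exact hs h
    · exact ht h
  · exact ⟨hsne.choose, Finset.mem_union_left _ hsne.choose_spec⟩
  · rw [Finset.inf_union]

lemma nerve_le_mem {𝒰 : Set (Opens X)} {V : Opens X} (hV : V ∈ nerveSet 𝒰) :
    ∃ W ∈ 𝒰, V ≤ W := by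
  obtain ⟨-, s, hs, ⟨w, hw⟩, rfl⟩ := hV
  exact ⟨w, hs hw, Finset.inf_le hw⟩

end Helpers
set_option linter.unusedSectionVars false

section Gen

variable {X : Type} [TopologicalSpace X] [AlexandrovDiscrete X]

/-- The cover of `U` by all nonempty open sets contained in some minimal open set. -/
def starCover (U : Opens X) : Set (Opens X) :=
  {V | (V : Set X).Nonempty ∧ ∃ x, x ∈ U ∧ V ≤ Uo x}

lemma starCover_le {U : Opens X} : ∀ V ∈ starCover U, V ≤ U := by
  rintro V ⟨-, x, hx, hV⟩
  exact hV.trans (Uo_le hx)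

lemma le_sSup_starCover (U : Opens X) : U ≤ sSup (starCover U) := by
  intro z hz
  exact Opens.mem_sSup.mpr ⟨Uo z, ⟨⟨z, mem_Uo_self z⟩, z, hz, le_rfl⟩, mem_Uo_self z⟩

lemma starCover_nerve_le {U : Opens X} {V : Opens X} (hV : V ∈ nerveSet (starCover U)) :
    ∃ x, x ∈ U ∧ V ≤ Uo x := by
  obtain ⟨W, ⟨-, x, hx, hW⟩, hVW⟩ := nerve_le_mem hV
  exact ⟨x, hx, hVW.trans hW⟩

lemma gen_induction (G : Precosheaf X) (hG : IsCosheaf G) (U : Opens X)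
    {p : G.obj U → Prop} (h0 : p 0) (hadd : ∀ a b, p a → p b → p (a + b))
    (hmem : ∀ (x : X) (hx : x ∈ U) (g : G.obj (Uo x)), p (G.map (homOfLE (Uo_le hx)) g)) :
    ∀ b, p b := by
  classical
  -- the subgroup generated by costalk images
  set S : AddSubgroup (G.obj U) :=
      ⨆ x : {x : X // x ∈ U}, (G.map (homOfLE (Uo_le x.2))).hom.range with hS
  have hStop : S = ⊤ := by
    obtain ⟨colim⟩ := hG U (starCover U) starCover_le (le_sSup_starCover U)
    set Q := AddCommGrpCat.of (G.obj U ⧸ S) with hQ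
    set q : G.obj U ⟶ Q := AddCommGrpCat.ofHom (QuotientAddGroup.mk' S) with hq
    set z : Cocone (nerveDiagram G (starCover U)) :=
      { pt := Q
        ι := { app := fun _ => 0, naturality := by intros; simp } } with hz
    have hker : ∀ (N : ObjectProperty.FullSubcategory (· ∈ nerveSet (starCover U))),
        (coverCocone G U (starCover U) starCover_le).ι.app N ≫ q = z.ι.app N := by
      intro N
      obtain ⟨x, hx, hNx⟩ := starCover_nerve_le N.2
      ext g
      show q (G.map (homOfLE (nerve_le starCover_le N.2)) g) = 0
      have : G.map (homOfLE (nerve_le starCover_le N.2)) g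
          = G.map (homOfLE (Uo_le hx)) (G.map (homOfLE hNx) g) := by
        exact (pmap_pmap G _ _ g).symm
      rw [this]
      have hmemS : G.map (homOfLE (Uo_le hx)) (G.map (homOfLE hNx) g) ∈ S := by
        refine AddSubgroup.mem_iSup_of_mem ⟨x, hx⟩ ?_
        exact ⟨_, rfl⟩
      simpa [hq, Q] using (QuotientAddGroup.eq_zero_iff _).mpr hmemS
    have h1 : q = colim.desc z := colim.uniq z q hker
    have h2 : (0 : G.obj U ⟶ Q) = colim.desc z := by
      refine colim.uniq z 0 ?_
      intro N
      simp only [Limits.comp_zero]; rfl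
    have hq0 : q = 0 := h1.trans h2.symm
    rw [eq_top_iff]
    intro b _
    have : q b = 0 := by rw [hq0]; rfl
    exact (QuotientAddGroup.eq_zero_iff _).mp this
  intro b
  have hb : b ∈ S := by rw [hStop]; trivial
  rw [hS] at hb
  refine AddSubgroup.iSup_induction (C := p) _ hb ?_ h0 hadd
  rintro ⟨x, hx⟩ b ⟨g, rfl⟩
  exact hmem x hx g

lemma gen_hom_ext (G : Precosheaf X) (hG : IsCosheaf G) (U : Opens X)
    {T : Type} [AddCommGroup T] (φ ψ : G.obj U →+ T)
    (h : ∀ (x : X) (hx : x ∈ U) (g : G.obj (Uo x)),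
      φ (G.map (homOfLE (Uo_le hx)) g) = ψ (G.map (homOfLE (Uo_le hx)) g)) :
    ∀ b, φ b = ψ b := by
  refine gen_induction G hG U (by simp) ?_ h
  intro a b ha hb
  simp [ha, hb]

lemma bot_trivial (G : Precosheaf X) (hG : IsCosheaf G) : ∀ b : G.obj ⊥, b = 0 := by
  refine gen_induction G hG ⊥ rfl ?_ ?_
  · intro a b ha hb
    rw [ha, hb, add_zero]
  · intro x hx
    cases hx

end Gen
section FL

variable {X : Type} [TopologicalSpace X] [AlexandrovDiscrete X]

/-- The universal property: a compatible family of maps on costalks extends (uniquely)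
to `G.obj V` for a cosheaf `G`. -/
lemma costalk_extend (G : Precosheaf X) (hG : IsCosheaf G) (V : Opens X)
    {T : Type} [AddCommGroup T]
    (f : ∀ (x : X), x ∈ V → (G.obj (Uo x) →+ T))
    (hf : ∀ (x y : X) (hx : x ∈ V) (hy : y ∈ V) (h : Uo y ≤ Uo x),
      (f x hx).comp (G.map (homOfLE h)).hom = f y hy) :
    ∃ Φ : G.obj V →+ T, ∀ (x : X) (hx : x ∈ V),
      Φ.comp (G.map (homOfLE (Uo_le hx))).hom = f x hx := by
  classical
  obtain ⟨colim⟩ := hG V (starCover V) starCover_le (le_sSup_starCover V)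
  -- independence of the choice of dominating minimal open
  have indep : ∀ (N : Opens X), N ∈ nerveSet (starCover V) →
      ∀ (x x' : X) (hx : x ∈ V) (hx' : x' ∈ V) (hNx : N ≤ Uo x) (hNx' : N ≤ Uo x')
      (g : G.obj N),
      f x hx (G.map (homOfLE hNx) g) = f x' hx' (G.map (homOfLE hNx') g) := by
    intro N hN x x' hx hx' hNx hNx' g
    have hNV : N ≤ V := hNx.trans (Uo_le hx)
    refine gen_hom_ext G hG N ((f x hx).comp (G.map (homOfLE hNx)).hom)
      ((f x' hx').comp (G.map (homOfLE hNx')).hom) ?_ g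
    intro z hz g'
    have hzV : z ∈ V := hNV hz
    have e1 : (f x hx) (G.map (homOfLE hNx) (G.map (homOfLE (Uo_le hz)) g'))
        = f z hzV g' := by
      rw [pmap_pmap]
      exact DFunLike.congr_fun (hf x z hx hzV _) g'
    have e2 : (f x' hx') (G.map (homOfLE hNx') (G.map (homOfLE (Uo_le hz)) g'))
        = f z hzV g' := by
      rw [pmap_pmap]
      exact DFunLike.congr_fun (hf x' z hx' hzV _) g'
    exact e1.trans e2.symm
  -- the cocone
  set c : Cocone (nerveDiagram G (starCover V)) :=
    { pt := AddCommGrpCat.of T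
      ι :=
        { app := fun N =>
            AddCommGrpCat.ofHom (((f (starCover_nerve_le N.2).choose
              (starCover_nerve_le N.2).choose_spec.1).comp
              (G.map (homOfLE (starCover_nerve_le N.2).choose_spec.2)).hom))
          naturality := by
            intro N N' k
            ext g
            show f _ _ (G.map (homOfLE _) ((G.map ((ObjectProperty.ι _).map k)) g))
              = f _ _ (G.map (homOfLE _) g)
            have hk : N.obj ≤ N'.obj := leOfHom ((ObjectProperty.ι _).map k)
            have : (ObjectProperty.ι (· ∈ nerveSet (starCover V))).map k
                = homOfLE hk := Subsingleton.elim _ _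
            erw [this, pmap_pmap]
            exact indep N.obj N.2 _ _ _ _ _ _ g } } with hc
  refine ⟨(colim.desc c : G.obj V ⟶ AddCommGrpCat.of T).hom, ?_⟩
  intro x hx
  have hUx : Uo x ∈ nerveSet (starCover V) :=
    nerve_single ⟨⟨x, mem_Uo_self x⟩, x, hx, le_rfl⟩ ⟨x, mem_Uo_self x⟩
  have hfac := colim.fac c ⟨Uo x, hUx⟩
  ext g
  have h1 : (coverCocone G V (starCover V) starCover_le).ι.app ⟨Uo x, hUx⟩ ≫ colim.desc c
      = c.ι.app ⟨Uo x, hUx⟩ := hfac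
  have h2 := ConcreteCategory.congr_hom h1 g
  show (colim.desc c) ((G.map (homOfLE (Uo_le hx))) g) = f x hx g
  have h3 : (G.map (homOfLE (nerve_le starCover_le hUx))) g
      = (G.map (homOfLE (Uo_le hx))) g := rfl
  rw [← h3]
  refine h2.trans ?_
  show f _ _ (G.map (homOfLE _) g) = f x hx g
  have := indep (Uo x) hUx (starCover_nerve_le hUx).choose x
    (starCover_nerve_le hUx).choose_spec.1 hx (starCover_nerve_le hUx).choose_spec.2 le_rfl g
  refine this.trans ?_
  have : G.map (homOfLE (le_rfl : Uo x ≤ Uo x)) g = g := by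
    have : homOfLE (le_rfl : Uo x ≤ Uo x) = 𝟙 (Uo x) := rfl
    rw [this, G.map_id]
    rfl
  rw [this]

end FL
section Coker

variable {X : Type} [TopologicalSpace X] [AlexandrovDiscrete X]

def toAddHom {A B : AddCommGrpCat.{0}} (f : A ⟶ B) : (A : Type) →+ (B : Type) := f.hom

lemma nat_apply {G H : Precosheaf X} (φ : G ⟶ H) {U V : Opens X} (h : U ⟶ V) (a : G.obj U) :
    φ.app V (G.map h a) = H.map h (φ.app U a) :=
  ConcreteCategory.congr_hom (φ.naturality h) a

variable {G H : Precosheaf X}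

/-- The objectwise cokernel of a morphism of precosheaves. -/
noncomputable def cokerF (φ : G ⟶ H) : Precosheaf X where
  obj U := AddCommGrpCat.of (H.obj U ⧸ (φ.app U).hom.range)
  map {U V} h := AddCommGrpCat.ofHom (QuotientAddGroup.map _ _ (H.map h).hom (by
    rintro b ⟨a, rfl⟩
    exact AddSubgroup.mem_comap.mpr ⟨G.map h a, (nat_apply φ h a)⟩))
  map_id U := by
    refine AddCommGrpCat.ext fun b => ?_
    refine QuotientAddGroup.induction_on b ?_
    intro b
    show QuotientAddGroup.mk (H.map (𝟙 U) b) = QuotientAddGroup.mk b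
    rw [H.map_id]
    rfl
  map_comp {U V W} h h' := by
    refine AddCommGrpCat.ext fun b => ?_
    refine QuotientAddGroup.induction_on b ?_
    intro b
    show QuotientAddGroup.mk (H.map (h ≫ h') b)
      = QuotientAddGroup.mk (H.map h' (H.map h b))
    rw [H.map_comp]
    rfl

lemma cokerF_map_mk (φ : G ⟶ H) {U V : Opens X} (h : U ⟶ V) (b : H.obj U) :
    (cokerF φ).map h (QuotientAddGroup.mk b) = QuotientAddGroup.mk (H.map h b) := rfl

/-- The projection onto the objectwise cokernel. -/
noncomputable def qMor (φ : G ⟶ H) : H ⟶ cokerF φ where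
  app U := AddCommGrpCat.ofHom (QuotientAddGroup.mk' _)
  naturality {U V} h := by
    ext b
    rfl

lemma qMor_app (φ : G ⟶ H) (U : Opens X) (b : H.obj U) :
    (qMor φ).app U b = QuotientAddGroup.mk b := rfl

lemma qMor_surjective (φ : G ⟶ H) (U : Opens X) :
    Function.Surjective ((qMor φ).app U) := by
  intro b
  refine QuotientAddGroup.induction_on b ?_
  intro b
  exact ⟨b, rfl⟩

/-- Descending a morphism killing the image to the cokernel. -/
noncomputable def cokerDesc (φ : G ⟶ H) {Q : Precosheaf X} (ψ : H ⟶ Q)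
    (hψ : ∀ (U : Opens X) (a : G.obj U), ψ.app U (φ.app U a) = 0) : cokerF φ ⟶ Q where
  app U := AddCommGrpCat.ofHom (QuotientAddGroup.lift _ (ψ.app U).hom (by
    rintro b ⟨a, rfl⟩
    exact hψ U a))
  naturality {U V} h := by
    ext b
    refine QuotientAddGroup.induction_on b ?_
    intro b
    show ψ.app V (H.map h b) = Q.map h (ψ.app U b)
    exact nat_apply ψ h b

lemma cokerDesc_mk (φ : G ⟶ H) {Q : Precosheaf X} (ψ : H ⟶ Q)
    (hψ : ∀ (U : Opens X) (a : G.obj U), ψ.app U (φ.app U a) = 0)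
    (U : Opens X) (b : H.obj U) :
    (cokerDesc φ ψ hψ).app U (QuotientAddGroup.mk b) = ψ.app U b := rfl

lemma mk_eq_zero_iff (φ : G ⟶ H) (U : Opens X) (b : H.obj U) :
    (QuotientAddGroup.mk b : H.obj U ⧸ (φ.app U).hom.range) = 0 ↔ b ∈ (φ.app U).hom.range :=
  QuotientAddGroup.eq_zero_iff b

/-- Lift a cocone on the cokernel diagram to a cocone on the diagram of `H`. -/
noncomputable def liftCocone (φ : G ⟶ H) (𝒰 : Set (Opens X))
    (s : Cocone (nerveDiagram (cokerF φ) 𝒰)) : Cocone (nerveDiagram H 𝒰) where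
  pt := s.pt
  ι :=
    { app := fun N => (qMor φ).app N.obj ≫ s.ι.app N
      naturality := by
        intro N N' k
        ext b
        exact ConcreteCategory.congr_hom (s.ι.naturality k)
          (QuotientAddGroup.mk b : (cokerF φ).obj N.obj) }

/-- The objectwise cokernel of a morphism of cosheaves is a cosheaf. -/
lemma isCosheaf_cokerF (φ : G ⟶ H) (hG : IsCosheaf G) (hH : IsCosheaf H) :
    IsCosheaf (cokerF φ) := by
  intro U 𝒰 h𝒰 hcov
  obtain ⟨colimH⟩ := hH U 𝒰 h𝒰 hcov
  have hmkill : ∀ (s : Cocone (nerveDiagram (cokerF φ) 𝒰)) (b : H.obj U),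
      b ∈ (φ.app U).hom.range → colimH.desc (liftCocone φ 𝒰 s) b = 0 := by
    rintro s b ⟨a, rfl⟩
    refine gen_induction G hG U (p := fun a => colimH.desc (liftCocone φ 𝒰 s) (φ.app U a) = 0)
      (by erw [map_zero, map_zero]) (fun a b ha hb => by erw [map_add, map_add, ha, hb, add_zero]) ?_ a
    intro x hx g
    rw [nat_apply φ (homOfLE (Uo_le hx)) g]
    obtain ⟨W, hW𝒰, hxW⟩ := Opens.mem_sSup.mp (hcov hx)
    have hWnerve : W ∈ nerveSet 𝒰 := nerve_single hW𝒰 ⟨x, hxW⟩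
    set NW : ObjectProperty.FullSubcategory (· ∈ nerveSet 𝒰) := ⟨W, hWnerve⟩ with hNW
    have hfactor : H.map (homOfLE (Uo_le hx)) (φ.app (Uo x) g)
        = H.map (homOfLE (nerve_le h𝒰 hWnerve))
            (H.map (homOfLE (Uo_le hxW)) (φ.app (Uo x) g)) := by
      rw [pmap_pmap]
    rw [hfactor]
    have hfacm := colimH.fac (liftCocone φ 𝒰 s) NW
    have hfac := ConcreteCategory.congr_hom hfacm (H.map (homOfLE (Uo_le hxW)) (φ.app (Uo x) g))
    refine hfac.trans ?_
    show s.ι.app NW ((cokerF φ).map (homOfLE (Uo_le hxW))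
      (QuotientAddGroup.mk (φ.app (Uo x) g))) = 0
    have hz : (QuotientAddGroup.mk (φ.app (Uo x) g) : (cokerF φ).obj (Uo x)) = 0 :=
      (mk_eq_zero_iff φ _ _).mpr ⟨g, rfl⟩
    rw [hz]
    erw [map_zero, map_zero]
  constructor
  refine
    { desc := fun s => AddCommGrpCat.ofHom (QuotientAddGroup.lift _
        (toAddHom (colimH.desc (liftCocone φ 𝒰 s)))
        (fun b hb => hmkill s b hb))
      fac := ?_
      uniq := ?_ }
  · intro s N
    ext b
    refine QuotientAddGroup.induction_on b ?_
    intro b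
    exact ConcreteCategory.congr_hom (colimH.fac (liftCocone φ 𝒰 s) N) b
  · intro s m hm
    have key : (qMor φ).app U ≫ m = colimH.desc (liftCocone φ 𝒰 s) := by
      refine colimH.uniq (liftCocone φ 𝒰 s) _ ?_
      intro N
      ext b
      exact ConcreteCategory.congr_hom (hm N) (QuotientAddGroup.mk b : (cokerF φ).obj N.obj)
    ext b
    refine QuotientAddGroup.induction_on b ?_
    intro b
    exact ConcreteCategory.congr_hom key b
end Coker
section MidExact

variable {X : Type} [TopologicalSpace X] [AlexandrovDiscrete X]

lemma surj_transfer {M N P : Type} [AddCommGroup M] [AddCommGroup N] [AddCommGroup P]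
    (g : M →+ N) (hg : Function.Surjective g) (u : M →+ P)
    (hu : ∀ m, g m = 0 → u m = 0) : ∃ v : N →+ P, ∀ m, v (g m) = u m := by
  have hker : g.ker ≤ u.ker := fun m hm => hu m hm
  refine ⟨(QuotientAddGroup.lift g.ker u hker).comp
    (QuotientAddGroup.quotientKerEquivOfSurjective g hg).symm.toAddMonoidHom, ?_⟩
  intro m
  have h1 : (QuotientAddGroup.quotientKerEquivOfSurjective g hg).symm (g m)
      = QuotientAddGroup.mk m := by
    rw [AddEquiv.symm_apply_eq]
    rfl
  show (QuotientAddGroup.lift g.ker u hker)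
    ((QuotientAddGroup.quotientKerEquivOfSurjective g hg).symm (g m)) = u m
  rw [h1]
  rfl

/-- Middle exactness at every open set, from costalk exactness. -/
lemma mid_exact {A B C : Precosheaf X} (α : A ⟶ B) (β : B ⟶ C)
    (hB : IsCosheaf B) (hC : IsCosheaf C)
    (hsur : ∀ x : X, Function.Surjective (β.app (Uo x)))
    (hker : ∀ (x : X) (b : B.obj (Uo x)),
      β.app (Uo x) b = 0 ↔ b ∈ (α.app (Uo x)).hom.range)
    (V : Opens X) : ∀ b : B.obj V, β.app V b = 0 → b ∈ (α.app V).hom.range := by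
  classical
  set Sr : AddSubgroup (B.obj V) := (α.app V).hom.range with hSr
  set q : (B.obj V : Type) →+ (B.obj V ⧸ Sr) := QuotientAddGroup.mk' Sr with hq
  have hex : ∀ (x : X) (hx : x ∈ V), ∃ v : (C.obj (Uo x) : Type) →+ (B.obj V ⧸ Sr),
      ∀ b, v (β.app (Uo x) b) = q (B.map (homOfLE (Uo_le hx)) b) := by
    intro x hx
    refine surj_transfer (toAddHom (β.app (Uo x))) (hsur x)
      (q.comp (toAddHom (B.map (homOfLE (Uo_le hx))))) ?_
    intro b hb
    obtain ⟨a, rfl⟩ := (hker x b).mp hb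
    have hnat : B.map (homOfLE (Uo_le hx)) (α.app (Uo x) a)
        = α.app V (A.map (homOfLE (Uo_le hx)) a) := (nat_apply α _ a).symm
    show q (B.map (homOfLE (Uo_le hx)) (α.app (Uo x) a)) = 0
    rw [hnat]
    exact (QuotientAddGroup.eq_zero_iff _).mpr ⟨_, rfl⟩
  have keyf : ∀ (x : X) (hx : x ∈ V) (b : B.obj (Uo x)),
      (hex x hx).choose (β.app (Uo x) b) = q (B.map (homOfLE (Uo_le hx)) b) :=
    fun x hx => (hex x hx).choose_spec
  have hcompat : ∀ (x y : X) (hx : x ∈ V) (hy : y ∈ V) (h : Uo y ≤ Uo x),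
      ((hex x hx).choose).comp (C.map (homOfLE h)).hom = (hex y hy).choose := by
    intro x y hx hy h
    ext c
    obtain ⟨b, rfl⟩ := hsur y c
    show (hex x hx).choose (C.map (homOfLE h) (β.app (Uo y) b))
      = (hex y hy).choose (β.app (Uo y) b)
    rw [← nat_apply β (homOfLE h) b, keyf x hx, keyf y hy, pmap_pmap]
  obtain ⟨Φ, hΦ⟩ := costalk_extend C hC V (fun x hx => (hex x hx).choose) hcompat
  have main : ∀ b : B.obj V, Φ (β.app V b) = q b := by
    refine gen_hom_ext B hB V (Φ.comp (toAddHom (β.app V))) q ?_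
    intro x hx b
    show Φ (β.app V (B.map (homOfLE (Uo_le hx)) b)) = q (B.map (homOfLE (Uo_le hx)) b)
    rw [nat_apply β (homOfLE (Uo_le hx)) b]
    refine Eq.trans ?_ (keyf x hx b)
    exact DFunLike.congr_fun (hΦ x hx) (β.app (Uo x) b)
  intro b hb
  have : q b = 0 := by
    rw [← main b, hb]
    simp
  exact (QuotientAddGroup.eq_zero_iff _).mp this

end MidExact
section ZornInj

variable {X : Type} [TopologicalSpace X] [AlexandrovDiscrete X]

lemma empty_trivial (G : Precosheaf X) (hG : IsCosheaf G) {V : Opens X}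
    (hV : ¬(V : Set X).Nonempty) : ∀ b : G.obj V, b = 0 := by
  refine gen_induction G hG V rfl ?_ ?_
  · intro a b ha hb
    rw [ha, hb, add_zero]
  · intro x hx
    exact absurd ⟨x, hx⟩ hV

lemma nerve_pair {V W N : Opens X} (hN : N ∈ nerveSet {V, W}) :
    N = V ∨ N = W ∨ N = V ⊓ W := by
  obtain ⟨hne, s, hs, hsne, rfl⟩ := hN
  by_cases hVs : V ∈ s <;> by_cases hWs : W ∈ s
  · right; right
    refine le_antisymm (le_inf (Finset.inf_le hVs) (Finset.inf_le hWs)) ?_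
    refine Finset.le_inf fun b hb => ?_
    rcases hs hb with rfl | h
    · exact inf_le_left
    · rw [Set.mem_singleton_iff] at h
      rw [h]
      exact inf_le_right
  · left
    refine le_antisymm (Finset.inf_le hVs) ?_
    refine Finset.le_inf fun b hb => ?_
    rcases hs hb with rfl | h
    · exact le_rfl
    · rw [Set.mem_singleton_iff] at h
      rw [h] at hb
      exact absurd hb hWs
  · right; left
    refine le_antisymm (Finset.inf_le hWs) ?_
    refine Finset.le_inf fun b hb => ?_
    rcases hs hb with rfl | h
    · exact absurd hb hVs
    · rw [Set.mem_singleton_iff] at h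
      rw [h]
      exact le_rfl
  · obtain ⟨w, hw⟩ := hsne
    rcases hs hw with rfl | h
    · exact absurd hw hVs
    · rw [Set.mem_singleton_iff] at h
      rw [h] at hw
      exact absurd hw hWs

/-- A partial character lift along `α` over an open subset of `U₀`. -/
structure PartialChar {A B : Precosheaf X} (α : A ⟶ B) (U₀ : Opens X)
    (ψ : (A.obj U₀ : Type) →+ AddCircle (1 : ℚ)) where
  V : Opens X
  hV : V ≤ U₀
  χ : (B.obj V : Type) →+ AddCircle (1 : ℚ)
  compat : ∀ a : A.obj V, χ (α.app V a) = ψ (A.map (homOfLE hV) a)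

/-- Extension order on partial characters. -/
def ple {A B : Precosheaf X} {α : A ⟶ B} {U₀ : Opens X}
    {ψ : (A.obj U₀ : Type) →+ AddCircle (1 : ℚ)}
    (p q : PartialChar α U₀ ψ) : Prop :=
  ∃ h : p.V ≤ q.V, ∀ b : B.obj p.V, q.χ (B.map (homOfLE h) b) = p.χ b

lemma ple_trans {A B : Precosheaf X} {α : A ⟶ B} {U₀ : Opens X}
    {ψ : (A.obj U₀ : Type) →+ AddCircle (1 : ℚ)}
    {p q r : PartialChar α U₀ ψ} (h1 : ple p q) (h2 : ple q r) : ple p r := by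
  obtain ⟨h, hc⟩ := h1
  obtain ⟨h', hc'⟩ := h2
  refine ⟨h.trans h', fun b => ?_⟩
  rw [← pmap_pmap B h h' b, hc' (B.map (homOfLE h) b), hc b]

/-- The key Zorn argument: a costalk-injective map of cosheaves whose "cokernel" `C`
is flasque is injective at every open set. -/
lemma zorn_inj {A B C : Precosheaf X} (α : A ⟶ B) (β : B ⟶ C)
    (hA : IsCosheaf A) (hB : IsCosheaf B)
    (hCfl : ∀ {V U : Opens X} (h : V ⟶ U), Function.Injective (C.map h))
    (hax : ∀ x : X, Function.Injective (α.app (Uo x)))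
    (hβα : ∀ (V : Opens X) (a : A.obj V), β.app V (α.app V a) = 0)
    (hMid : ∀ (V : Opens X) (b : B.obj V), β.app V b = 0 → b ∈ (α.app V).hom.range)
    (U₀ : Opens X) : Function.Injective (α.app U₀) := by
  classical
  suffices hchar : ∀ ψ : (A.obj U₀ : Type) →+ AddCircle (1 : ℚ),
      ∃ χ : (B.obj U₀ : Type) →+ AddCircle (1 : ℚ), ∀ a, χ (α.app U₀ a) = ψ a by
    refine (injective_iff_map_eq_zero (toAddHom (α.app U₀))).mpr ?_
    intro a ha
    by_contra hne
    obtain ⟨ψ0, hψ0⟩ := CharacterModule.exists_character_apply_ne_zero_of_ne_zero hne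
    obtain ⟨χ, hχ⟩ := hchar ψ0
    have h1 := hχ a
    rw [show α.app U₀ a = 0 from ha, map_zero] at h1
    exact hψ0 h1.symm
  intro ψ
  -- the base partial character
  have base : PartialChar α U₀ ψ := by
    refine ⟨⊥, bot_le, 0, ?_⟩
    intro a
    rw [bot_trivial A hA a]
    simp
  -- chains are bounded
  have hchains : ∀ c : Set (PartialChar α U₀ ψ), IsChain ple c →
      ∃ ub, ∀ p ∈ c, ple p ub := by
    intro c hc
    by_cases hcne : c.Nonempty
    swap
    · exact ⟨base, fun p hp => absurd ⟨p, hp⟩ hcne⟩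
    set 𝒰c : Set (Opens X) := (fun p : PartialChar α U₀ ψ => p.V) '' c with h𝒰c
    set Vs : Opens X := sSup 𝒰c with hVs
    have hVsU₀ : Vs ≤ U₀ := by
      refine sSup_le ?_
      rintro _ ⟨p, hp, rfl⟩
      exact p.hV
    have hle : ∀ Y ∈ 𝒰c, Y ≤ Vs := fun Y hY => le_sSup hY
    obtain ⟨colimB⟩ := hB Vs 𝒰c hle le_rfl
    have key2 : ∀ p q : PartialChar α U₀ ψ, p ∈ c → q ∈ c →
        ∀ (N : Opens X) (h1 : N ≤ p.V) (h2 : N ≤ q.V) (b : B.obj N),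
        p.χ (B.map (homOfLE h1) b) = q.χ (B.map (homOfLE h2) b) := by
      intro p q hp hq N h1 h2 b
      by_cases hpq : p = q
      · subst hpq
        rfl
      rcases hc hp hq hpq with ⟨h, hcomp⟩ | ⟨h, hcomp⟩
      · rw [← hcomp (B.map (homOfLE h1) b), pmap_pmap]
      · rw [← hcomp (B.map (homOfLE h2) b), pmap_pmap]
    have hchoose : ∀ N : ObjectProperty.FullSubcategory (· ∈ nerveSet 𝒰c),
        ∃ p : PartialChar α U₀ ψ, p ∈ c ∧ N.obj ≤ p.V := by
      intro N
      obtain ⟨Y, hY, hWle⟩ := nerve_le_mem N.2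
      obtain ⟨p, hp, rfl⟩ := hY
      exact ⟨p, hp, hWle⟩
    set cc : Cocone (nerveDiagram B 𝒰c) :=
      { pt := AddCommGrpCat.of (AddCircle (1 : ℚ))
        ι :=
          { app := fun N => AddCommGrpCat.ofHom (((hchoose N).choose.χ).comp
              (toAddHom (B.map (homOfLE (hchoose N).choose_spec.2))))
            naturality := by
              intro N N' k
              have hk : N.obj ≤ N'.obj := leOfHom k.hom
              ext b
              show (hchoose N').choose.χ (B.map (homOfLE (hchoose N').choose_spec.2)
                  (B.map (homOfLE hk) b))
                = (hchoose N).choose.χ (B.map (homOfLE (hchoose N).choose_spec.2) b)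
              erw [pmap_pmap]
              exact key2 _ _ (hchoose N').choose_spec.1 (hchoose N).choose_spec.1 N.obj
                _ _ b } }
      with hcc
    set χs : (B.obj Vs : Type) →+ AddCircle (1 : ℚ) := toAddHom (colimB.desc cc) with hχs
    have hfacV : ∀ p, p ∈ c → ∀ (h : p.V ≤ Vs) (b : B.obj p.V),
        χs (B.map (homOfLE h) b) = p.χ b := by
      intro p hp h b
      by_cases hne : (p.V : Set X).Nonempty
      · have hmem : p.V ∈ nerveSet 𝒰c := nerve_single ⟨p, hp, rfl⟩ hne
        have hfac := ConcreteCategory.congr_hom (colimB.fac cc ⟨p.V, hmem⟩) b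
        refine Eq.trans (show χs (B.map (homOfLE h) b) = _ from rfl) (hfac.trans ?_)
        show (hchoose ⟨p.V, hmem⟩).choose.χ (B.map _ b) = p.χ b
        have hk2 := key2 _ p (hchoose ⟨p.V, hmem⟩).choose_spec.1 hp p.V
          (hchoose ⟨p.V, hmem⟩).choose_spec.2 le_rfl b
        rw [hk2]
        have hid : homOfLE (le_refl p.V) = 𝟙 p.V := rfl
        rw [hid, B.map_id]
        rfl
      · rw [empty_trivial B hB hne b]
        simp
    refine ⟨⟨Vs, hVsU₀, χs, ?_⟩, ?_⟩
    · refine gen_hom_ext A hA Vs (χs.comp (toAddHom (α.app Vs)))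
        (ψ.comp (toAddHom (A.map (homOfLE hVsU₀)))) ?_
      intro z hz a
      obtain ⟨Wp, hWp, hzW⟩ := Opens.mem_sSup.mp hz
      obtain ⟨p, hp, hpV⟩ := hWp
      have hpV' : p.V = Wp := hpV
      rw [← hpV'] at hzW
      have hWp2 : p.V ∈ 𝒰c := ⟨p, hp, rfl⟩
      show χs (α.app Vs (A.map (homOfLE (Uo_le hz)) a))
        = ψ (A.map (homOfLE hVsU₀) (A.map (homOfLE (Uo_le hz)) a))
      rw [nat_apply α (homOfLE (Uo_le hz)) a]
      have hsplit : B.map (homOfLE (Uo_le hz)) (α.app (Uo z) a)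
          = B.map (homOfLE (le_sSup hWp2))
              (B.map (homOfLE (Uo_le hzW)) (α.app (Uo z) a)) := by
        rw [pmap_pmap]
      rw [hsplit, hfacV p hp _ _, ← nat_apply α (homOfLE (Uo_le hzW)) a]
      have hcmp := p.compat (A.map (homOfLE (Uo_le hzW)) a)
      rw [hcmp, pmap_pmap, pmap_pmap]
    · intro p hp
      exact ⟨le_sSup ⟨p, hp, rfl⟩, hfacV p hp _⟩
  -- Zorn
  obtain ⟨m, hm⟩ := exists_maximal_of_chains_bounded hchains (fun {a b c} => ple_trans)
  have hVU : m.V = U₀ := by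
    by_contra hne
    obtain ⟨x, hxU₀, hxV⟩ := SetLike.exists_of_lt (lt_of_le_of_ne m.hV hne)
    set ξ := m.χ.comp (toAddHom (B.map (homOfLE (inf_le_left : (m.V ⊓ Uo x) ≤ m.V)))) with hξ
    set φp := (toAddHom (α.app (Uo x))).coprod
      (toAddHom (B.map (homOfLE (inf_le_right : (m.V ⊓ Uo x) ≤ (Uo x))))) with hφp
    set κ := (ψ.comp (toAddHom (A.map (homOfLE (Uo_le hxU₀))))).coprod ξ with hκ
    have hφp_apply : ∀ (a' : A.obj (Uo x)) (b'' : B.obj (m.V ⊓ Uo x)),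
        φp (a', b'') = α.app (Uo x) a' + B.map (homOfLE (inf_le_right : (m.V ⊓ Uo x) ≤ (Uo x))) b'' := by
      intro a' b''
      rw [hφp]
      rfl
    have hκ_apply : ∀ (a' : A.obj (Uo x)) (b'' : B.obj (m.V ⊓ Uo x)),
        κ (a', b'') = ψ (A.map (homOfLE (Uo_le hxU₀)) a')
          + m.χ (B.map (homOfLE (inf_le_left : (m.V ⊓ Uo x) ≤ m.V)) b'') := by
      intro a' b''
      rw [hκ, hξ]
      rfl
    have hkerκ : ∀ p, φp p = 0 → κ p = 0 := by
      rintro ⟨a', b''⟩ hp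
      have hp' : α.app (Uo x) a' + B.map (homOfLE (inf_le_right : (m.V ⊓ Uo x) ≤ (Uo x))) b'' = 0 := by
        rw [← hφp_apply a' b'']
        exact hp
      have h1 : C.map (homOfLE (inf_le_right : (m.V ⊓ Uo x) ≤ (Uo x))) (β.app (m.V ⊓ Uo x) b'') = 0 := by
        have h0 := congrArg (β.app (Uo x)) hp'
        rw [map_add, map_zero, hβα (Uo x) a', zero_add,
          nat_apply β (homOfLE (inf_le_right : (m.V ⊓ Uo x) ≤ (Uo x))) b''] at h0
        exact h0
      have h2 : β.app (m.V ⊓ Uo x) b'' = 0 := by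
        refine hCfl (homOfLE (inf_le_right : (m.V ⊓ Uo x) ≤ (Uo x))) ?_
        rw [h1, map_zero]
      obtain ⟨a'', ha''⟩ := hMid (m.V ⊓ Uo x) b'' h2
      have h3 : α.app (Uo x) (a' + A.map (homOfLE (inf_le_right : (m.V ⊓ Uo x) ≤ (Uo x))) a'') = 0 := by
        rw [map_add, nat_apply α (homOfLE (inf_le_right : (m.V ⊓ Uo x) ≤ (Uo x))) a'', ha'']
        exact hp'
      have h4 : a' = - A.map (homOfLE (inf_le_right : (m.V ⊓ Uo x) ≤ (Uo x))) a'' := by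
        have h0 : α.app (Uo x) (a' + A.map (homOfLE (inf_le_right : (m.V ⊓ Uo x) ≤ (Uo x))) a'')
            = α.app (Uo x) 0 := by rw [map_zero]; exact h3
        have h5 := hax x h0
        exact eq_neg_of_add_eq_zero_left h5
      rw [hκ_apply a' b'', h4, map_neg, map_neg, ← ha'',
        ← nat_apply α (homOfLE (inf_le_left : (m.V ⊓ Uo x) ≤ m.V)) a'',
        m.compat (A.map (homOfLE (inf_le_left : (m.V ⊓ Uo x) ≤ m.V)) a''),
        pmap_pmap, pmap_pmap]
      exact neg_add_cancel _
    -- extend the character from the range of φp to all of B((Uo x))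
    obtain ⟨v, hv⟩ := surj_transfer φp.rangeRestrict φp.rangeRestrict_surjective κ
      (by
        intro p hp0
        refine hkerκ p ?_
        have := congrArg (Subtype.val) hp0
        exact this)
    obtain ⟨eta, heta_eq⟩ := CharacterModule.dual_surjective_of_injective (R := ℤ)
      ((φp.range).subtype.toIntLinearMap) (by exact Subtype.coe_injective) v
    have hetaPhi : ∀ p, eta (φp p) = κ p := by
      intro p
      have h5 := DFunLike.congr_fun heta_eq (φp.rangeRestrict p)
      have h6 : (CharacterModule.dual ((φp.range).subtype.toIntLinearMap) eta)
          (φp.rangeRestrict p) = eta (φp p) := rfl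
      rw [h6] at h5
      rw [h5]
      exact hv p
    have heta_eqA : ∀ a' : A.obj (Uo x), eta (α.app (Uo x) a') = ψ (A.map (homOfLE (Uo_le hxU₀)) a') := by
      intro a'
      have h7 := hetaPhi (a', 0)
      rw [hφp_apply, hκ_apply] at h7
      simpa using h7
    have hetaZ : ∀ b'' : B.obj (m.V ⊓ Uo x), eta (B.map (homOfLE (inf_le_right : (m.V ⊓ Uo x) ≤ (Uo x))) b'')
        = m.χ (B.map (homOfLE (inf_le_left : (m.V ⊓ Uo x) ≤ m.V)) b'') := by
      intro b''
      have h7 := hetaPhi (0, b'')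
      rw [hφp_apply, hκ_apply] at h7
      simpa using h7
    -- glue the characters over the pair cover
    set 𝒰p : Set (Opens X) := {m.V, (Uo x)} with h𝒰p
    have h1p : ∀ Y ∈ 𝒰p, Y ≤ (m.V ⊔ Uo x) := by
      rintro Y (rfl | hY)
      · exact le_sup_left
      · rw [Set.mem_singleton_iff] at hY
        rw [hY]
        exact le_sup_right
    obtain ⟨colimB2⟩ := hB (m.V ⊔ Uo x) 𝒰p h1p (by rw [sSup_pair])
    have hNW : ∀ (N : Opens X), N ∈ nerveSet 𝒰p → ¬(N ≤ m.V) → N ≤ (Uo x) := by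
      intro N hN hNV
      rcases nerve_pair hN with rfl | rfl | rfl
      · exact absurd le_rfl hNV
      · exact le_rfl
      · exact inf_le_right
    set cc2 : Cocone (nerveDiagram B 𝒰p) :=
      { pt := AddCommGrpCat.of (AddCircle (1 : ℚ))
        ι :=
          { app := fun N =>
              if h : N.obj ≤ m.V then
                AddCommGrpCat.ofHom (m.χ.comp (toAddHom (B.map (homOfLE h))))
              else
                AddCommGrpCat.ofHom (eta.comp (toAddHom (B.map (homOfLE (hNW N.obj N.2 h)))))
            naturality := by
              intro N N' k
              have hk : N.obj ≤ N'.obj := leOfHom k.hom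
              by_cases h' : N'.obj ≤ m.V <;> by_cases h : N.obj ≤ m.V
              · ext b
                erw [dif_pos h', dif_pos h]
                show m.χ (B.map (homOfLE h')
                    (B.map (homOfLE hk) b)) = m.χ (B.map (homOfLE h) b)
                erw [pmap_pmap]
              · exact absurd (hk.trans h') h
              · -- factor through the intersection
                ext b
                erw [dif_neg h', dif_pos h]
                show eta (B.map (homOfLE (hNW N'.obj N'.2 h'))
                    (B.map (homOfLE hk) b)) = m.χ (B.map (homOfLE h) b)
                erw [pmap_pmap]
                have hNZ : N.obj ≤ (m.V ⊓ Uo x) := le_inf h (hk.trans (hNW N'.obj N'.2 h'))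
                have hw : B.map (homOfLE (hk.trans (hNW N'.obj N'.2 h'))) b
                    = B.map (homOfLE (inf_le_right : (m.V ⊓ Uo x) ≤ (Uo x))) (B.map (homOfLE hNZ) b) := by
                  erw [pmap_pmap]
                rw [hw, hetaZ]
                show m.χ (B.map (homOfLE (inf_le_left : (m.V ⊓ Uo x) ≤ m.V))
                  (B.map (homOfLE hNZ) b)) = m.χ (B.map (homOfLE h) b)
                erw [pmap_pmap]
              · ext b
                erw [dif_neg h', dif_neg h]
                show eta (B.map (homOfLE (hNW N'.obj N'.2 h'))
                    (B.map (homOfLE hk) b))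
                  = eta (B.map (homOfLE (hNW N.obj N.2 h)) b)
                erw [pmap_pmap] } }
      with hcc2
    set chi' : (B.obj (m.V ⊔ Uo x) : Type) →+ AddCircle (1 : ℚ) := toAddHom (colimB2.desc cc2) with hchidef
    have hchiV : ∀ b : B.obj m.V, chi' (B.map (homOfLE (le_sup_left : m.V ≤ (m.V ⊔ Uo x))) b) = m.χ b := by
      intro b
      by_cases hne : (m.V : Set X).Nonempty
      · have hmem : m.V ∈ nerveSet 𝒰p := nerve_single (Set.mem_insert _ _) hne
        have hfac := ConcreteCategory.congr_hom (colimB2.fac cc2 ⟨m.V, hmem⟩) b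
        refine Eq.trans (show chi' (B.map (homOfLE (le_sup_left : m.V ≤ (m.V ⊔ Uo x))) b) = _ from rfl)
          (hfac.trans ?_)
        show (if h : m.V ≤ m.V then _ else _ : (B.obj m.V) ⟶ AddCommGrpCat.of (AddCircle (1:ℚ))) b
          = m.χ b
        rw [dif_pos (le_refl m.V)]
        show m.χ (B.map (homOfLE (le_refl m.V)) b) = m.χ b
        have hid : homOfLE (le_refl m.V) = 𝟙 m.V := rfl
        rw [hid, B.map_id]
        rfl
      · rw [empty_trivial B hB hne b]
        simp
    have hchiW : ∀ b : B.obj (Uo x), chi' (B.map (homOfLE (le_sup_right : (Uo x) ≤ (m.V ⊔ Uo x))) b) = eta b := by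
      intro b
      have hmem : (Uo x) ∈ nerveSet 𝒰p :=
        nerve_single (Set.mem_insert_iff.mpr (Or.inr rfl)) ⟨x, mem_Uo_self x⟩
      have hfac := ConcreteCategory.congr_hom (colimB2.fac cc2 ⟨(Uo x), hmem⟩) b
      refine Eq.trans (show chi' (B.map (homOfLE (le_sup_right : (Uo x) ≤ (m.V ⊔ Uo x))) b) = _ from rfl)
        (hfac.trans ?_)
      have hWnV : ¬((Uo x) ≤ m.V) := fun h => hxV (h (mem_Uo_self x))
      show (if h : (Uo x) ≤ m.V then _ else _ : (B.obj (Uo x)) ⟶ AddCommGrpCat.of (AddCircle (1:ℚ))) b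
        = eta b
      rw [dif_neg hWnV]
      show eta (B.map (homOfLE (hNW (Uo x) hmem hWnV)) b) = eta b
      have hid : homOfLE (hNW (Uo x) hmem hWnV) = 𝟙 (Uo x) := rfl
      rw [hid, B.map_id]
      rfl
    have compat' : ∀ a : A.obj (m.V ⊔ Uo x),
        chi' (α.app (m.V ⊔ Uo x) a) = ψ (A.map (homOfLE (sup_le m.hV (Uo_le hxU₀))) a) := by
      refine gen_hom_ext A hA (m.V ⊔ Uo x) (chi'.comp (toAddHom (α.app (m.V ⊔ Uo x))))
        (ψ.comp (toAddHom (A.map (homOfLE (sup_le m.hV (Uo_le hxU₀)))))) ?_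
      intro z hz a
      show chi' (α.app (m.V ⊔ Uo x) (A.map (homOfLE (Uo_le hz)) a))
        = ψ (A.map (homOfLE (sup_le m.hV (Uo_le hxU₀))) (A.map (homOfLE (Uo_le hz)) a))
      rw [nat_apply α (homOfLE (Uo_le hz)) a]
      have hz' : z ∈ (m.V : Set X) ∪ ((Uo x) : Set X) := by
        have : (((m.V ⊔ Uo x) : Opens X) : Set X) = (m.V : Set X) ∪ ((Uo x) : Set X) := rfl
        rw [← this]
        exact hz
      rcases hz' with hzV | hzW
      · have hsplit : B.map (homOfLE (Uo_le hz)) (α.app (Uo z) a)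
            = B.map (homOfLE (le_sup_left : m.V ≤ (m.V ⊔ Uo x)))
                (B.map (homOfLE (Uo_le hzV)) (α.app (Uo z) a)) := by
          rw [pmap_pmap]
        rw [hsplit, hchiV, ← nat_apply α (homOfLE (Uo_le hzV)) a,
          m.compat (A.map (homOfLE (Uo_le hzV)) a), pmap_pmap, pmap_pmap]
      · have hsplit : B.map (homOfLE (Uo_le hz)) (α.app (Uo z) a)
            = B.map (homOfLE (le_sup_right : (Uo x) ≤ (m.V ⊔ Uo x)))
                (B.map (homOfLE (Uo_le hzW)) (α.app (Uo z) a)) := by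
          rw [pmap_pmap]
        rw [hsplit, hchiW, ← nat_apply α (homOfLE (Uo_le hzW)) a,
          heta_eqA (A.map (homOfLE (Uo_le hzW)) a), pmap_pmap, pmap_pmap]

    have hmq : ple m ⟨(m.V ⊔ Uo x), sup_le m.hV (Uo_le hxU₀), chi', compat'⟩ :=
      ⟨le_sup_left, hchiV⟩
    obtain ⟨h, -⟩ := hm _ hmq
    exact hxV (h ((le_sup_right : (Uo x) ≤ (m.V ⊔ Uo x)) (mem_Uo_self x)))
  -- conclude
  refine ⟨m.χ.comp (toAddHom (B.map (homOfLE (le_of_eq hVU.symm)))), ?_⟩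
  intro a
  show m.χ (B.map (homOfLE (le_of_eq hVU.symm)) (α.app U₀ a)) = ψ a
  rw [← nat_apply α (homOfLE (le_of_eq hVU.symm)) a,
    m.compat (A.map (homOfLE (le_of_eq hVU.symm)) a), pmap_pmap]
  have hid : homOfLE ((le_of_eq hVU.symm).trans m.hV) = 𝟙 U₀ := rfl
  rw [hid, A.map_id]
  rfl

end ZornInj
section CoverCosheaf

set_option maxHeartbeats 1000000

variable {X : Type} [TopologicalSpace X] [AlexandrovDiscrete X]

noncomputable local instance (α : Type) : DecidableEq α := fun _ _ => Classical.propDecidable _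
noncomputable local instance (p : Prop) : Decidable p := Classical.propDecidable p

noncomputable def ecObj (P : Precosheaf X) (U : Opens X) : AddCommGrpCat.{0} :=
  AddCommGrpCat.of (DirectSum (U : Set X) (fun x : (U : Set X) => (P.obj (Uo x.1) : Type)))

noncomputable def ecMap (P : Precosheaf X) {U V : Opens X} (h : U ≤ V) :
    ecObj P U ⟶ ecObj P V :=
  AddCommGrpCat.ofHom (DirectSum.toAddMonoid
    (fun x : (U : Set X) =>
      DirectSum.of (fun y : (V : Set X) => (P.obj (Uo y.1) : Type)) ⟨x.1, h x.2⟩))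

lemma ecMap_of (P : Precosheaf X) {U V : Opens X} (h : U ≤ V) (x : (U : Set X))
    (p : P.obj (Uo x.1)) :
    ecMap P h (DirectSum.of (fun y : (U : Set X) => (P.obj (Uo y.1) : Type)) x p)
      = DirectSum.of (fun y : (V : Set X) => (P.obj (Uo y.1) : Type)) ⟨x.1, h x.2⟩ p :=
  DirectSum.toAddMonoid_of _ _ _

/-- The canonical "costalk cover" of a precosheaf: `U ↦ ⊕_{x ∈ U} P(Uₓ)`. -/
noncomputable def EC (P : Precosheaf X) : Precosheaf X where
  obj U := ecObj P U
  map {U V} h := ecMap P h.le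
  map_id U := by
    refine AddCommGrpCat.hom_ext (DirectSum.addHom_ext fun x p => ?_)
    show ecMap P le_rfl (DirectSum.of (fun y : (U : Set X) => (P.obj (Uo y.1) : Type)) x p)
      = DirectSum.of (fun y : (U : Set X) => (P.obj (Uo y.1) : Type)) x p
    erw [ecMap_of]
  map_comp {U V W} h h' := by
    refine AddCommGrpCat.hom_ext (DirectSum.addHom_ext fun x p => ?_)
    show ecMap P (h.le.trans h'.le)
        (DirectSum.of (fun y : (U : Set X) => (P.obj (Uo y.1) : Type)) x p)
      = ecMap P h'.le (ecMap P h.le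
          (DirectSum.of (fun y : (U : Set X) => (P.obj (Uo y.1) : Type)) x p))
    erw [ecMap_of, ecMap_of, ecMap_of]

lemma EC_map_eq (P : Precosheaf X) {U V : Opens X} (h : U ⟶ V) :
    (EC P).map h = ecMap P h.le := rfl

lemma EC_flasque (P : Precosheaf X) {U V : Opens X} (h : U ⟶ V) :
    Function.Injective ((EC P).map h) := by
  set r : (ecObj P V : Type) →+ (ecObj P U : Type) := DirectSum.toAddMonoid
    (fun y : (V : Set X) => if hy : y.1 ∈ U then
      DirectSum.of (fun z : (U : Set X) => (P.obj (Uo z.1) : Type)) ⟨y.1, hy⟩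
      else 0) with hr
  have hret : ∀ a, r ((EC P).map h a) = a := by
    intro a
    have hcmp : r.comp (toAddHom ((EC P).map h)) = AddMonoidHom.id _ := by
      refine DirectSum.addHom_ext fun x p => ?_
      show r ((EC P).map h
          (DirectSum.of (fun y : (U : Set X) => (P.obj (Uo y.1) : Type)) x p))
        = DirectSum.of (fun y : (U : Set X) => (P.obj (Uo y.1) : Type)) x p
      erw [EC_map_eq, ecMap_of, hr, DirectSum.toAddMonoid_of]
      have hx : x.1 ∈ U := x.2
      erw [dif_pos hx]
      rfl
    exact DFunLike.congr_fun hcmp a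
  intro a b hab
  rw [← hret a, ← hret b, hab]

/-- The canonical projection from the costalk cover. -/
noncomputable def projEC (P : Precosheaf X) : EC P ⟶ P where
  app U := AddCommGrpCat.ofHom (DirectSum.toAddMonoid
    (fun x : (U : Set X) => toAddHom (P.map (homOfLE (Uo_le x.2)))))
  naturality {U V} h := by
    refine AddCommGrpCat.hom_ext (DirectSum.addHom_ext fun x p => ?_)
    show (DirectSum.toAddMonoid
        (fun x : (V : Set X) => toAddHom (P.map (homOfLE (Uo_le x.2)))))
        ((EC P).map h (DirectSum.of (fun y : (U : Set X) => (P.obj (Uo y.1) : Type)) x p))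
      = P.map h ((DirectSum.toAddMonoid
          (fun x : (U : Set X) => toAddHom (P.map (homOfLE (Uo_le x.2)))))
          (DirectSum.of (fun y : (U : Set X) => (P.obj (Uo y.1) : Type)) x p))
    erw [EC_map_eq, ecMap_of, DirectSum.toAddMonoid_of, DirectSum.toAddMonoid_of]
    exact (pmap_pmap P (Uo_le x.2) h.le p).symm

lemma projEC_of (P : Precosheaf X) (U : Opens X) (x : (U : Set X)) (p : P.obj (Uo x.1)) :
    (projEC P).app U (DirectSum.of (fun y : (U : Set X) => (P.obj (Uo y.1) : Type)) x p)
      = P.map (homOfLE (Uo_le x.2)) p :=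
  DirectSum.toAddMonoid_of _ _ _

lemma projEC_costalk_surj (P : Precosheaf X) (x : X) :
    Function.Surjective ((projEC P).app (Uo x)) := by
  intro g
  refine ⟨DirectSum.of (fun y : ((Uo x : Opens X) : Set X) => (P.obj (Uo y.1) : Type))
    ⟨x, mem_Uo_self x⟩ g, ?_⟩
  erw [projEC_of]
  show P.map (homOfLE (Uo_le (mem_Uo_self x))) g = g
  have hid : homOfLE (Uo_le (mem_Uo_self x)) = 𝟙 (Uo x) := rfl
  rw [hid, P.map_id]
  rfl

lemma isCosheaf_EC (P : Precosheaf X) : IsCosheaf (EC P) := by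
  intro U 𝒰 h𝒰 hcov
  have hWx : ∀ x : (U : Set X), ∃ W : Opens X, W ∈ nerveSet 𝒰 ∧ x.1 ∈ W := by
    intro x
    obtain ⟨W, hW𝒰, hxW⟩ := Opens.mem_sSup.mp (hcov x.2)
    exact ⟨W, nerve_single hW𝒰 ⟨x.1, hxW⟩, hxW⟩
  set gleg : ∀ (s : Cocone (nerveDiagram (EC P) 𝒰)) (x : (U : Set X)),
      (P.obj (Uo x.1) : Type) →+ (s.pt : Type) :=
    fun s x => (toAddHom (s.ι.app ⟨(hWx x).choose, (hWx x).choose_spec.1⟩)).comp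
      (DirectSum.of (fun y : ((hWx x).choose : Set X) => (P.obj (Uo y.1) : Type))
        ⟨x.1, (hWx x).choose_spec.2⟩) with hgleg
  have key : ∀ (s : Cocone (nerveDiagram (EC P) 𝒰)) (N : ObjectProperty.FullSubcategory (· ∈ nerveSet 𝒰))
      (x : X) (hxN : x ∈ N.obj) (hxU : x ∈ U) (p : P.obj (Uo x)),
      s.ι.app N (DirectSum.of (fun y : (N.obj : Set X) => (P.obj (Uo y.1) : Type)) ⟨x, hxN⟩ p)
        = gleg s ⟨x, hxU⟩ p := by
    intro s N x hxN hxU p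
    have hWnerve : (hWx ⟨x, hxU⟩).choose ∈ nerveSet 𝒰 := (hWx ⟨x, hxU⟩).choose_spec.1
    have hxW : x ∈ (hWx ⟨x, hxU⟩).choose := (hWx ⟨x, hxU⟩).choose_spec.2
    have hNW : N.obj ⊓ (hWx ⟨x, hxU⟩).choose ∈ nerveSet 𝒰 :=
      nerve_inter N.2 hWnerve ⟨x, hxN, hxW⟩
    have k1 : (⟨N.obj ⊓ (hWx ⟨x, hxU⟩).choose, hNW⟩ : ObjectProperty.FullSubcategory (· ∈ nerveSet 𝒰)) ⟶ N :=
      ObjectProperty.homMk (homOfLE inf_le_left)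
    have k2 : (⟨N.obj ⊓ (hWx ⟨x, hxU⟩).choose, hNW⟩ : ObjectProperty.FullSubcategory (· ∈ nerveSet 𝒰)) ⟶
        ⟨(hWx ⟨x, hxU⟩).choose, hWnerve⟩ := ObjectProperty.homMk (homOfLE inf_le_right)
    have e1 : s.ι.app N ((nerveDiagram (EC P) 𝒰).map k1
        (DirectSum.of (fun y : ((N.obj ⊓ (hWx ⟨x, hxU⟩).choose : Opens X) : Set X) =>
          (P.obj (Uo y.1) : Type)) ⟨x, hxN, hxW⟩ p))
        = s.ι.app ⟨N.obj ⊓ (hWx ⟨x, hxU⟩).choose, hNW⟩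
          (DirectSum.of (fun y : ((N.obj ⊓ (hWx ⟨x, hxU⟩).choose : Opens X) : Set X) =>
            (P.obj (Uo y.1) : Type)) ⟨x, hxN, hxW⟩ p) :=
      ConcreteCategory.congr_hom (s.ι.naturality k1)
        (DirectSum.of (fun y : ((N.obj ⊓ (hWx ⟨x, hxU⟩).choose : Opens X) : Set X) =>
          (P.obj (Uo y.1) : Type)) ⟨x, hxN, hxW⟩ p)
    have e2 : s.ι.app ⟨(hWx ⟨x, hxU⟩).choose, hWnerve⟩ ((nerveDiagram (EC P) 𝒰).map k2
        (DirectSum.of (fun y : ((N.obj ⊓ (hWx ⟨x, hxU⟩).choose : Opens X) : Set X) =>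
          (P.obj (Uo y.1) : Type)) ⟨x, hxN, hxW⟩ p))
        = s.ι.app ⟨N.obj ⊓ (hWx ⟨x, hxU⟩).choose, hNW⟩
          (DirectSum.of (fun y : ((N.obj ⊓ (hWx ⟨x, hxU⟩).choose : Opens X) : Set X) =>
            (P.obj (Uo y.1) : Type)) ⟨x, hxN, hxW⟩ p) :=
      ConcreteCategory.congr_hom (s.ι.naturality k2)
        (DirectSum.of (fun y : ((N.obj ⊓ (hWx ⟨x, hxU⟩).choose : Opens X) : Set X) =>
          (P.obj (Uo y.1) : Type)) ⟨x, hxN, hxW⟩ p)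
    have hm1 : s.ι.app N ((nerveDiagram (EC P) 𝒰).map k1
        (DirectSum.of (fun y : ((N.obj ⊓ (hWx ⟨x, hxU⟩).choose : Opens X) : Set X) =>
          (P.obj (Uo y.1) : Type)) ⟨x, hxN, hxW⟩ p))
        = s.ι.app N
          (DirectSum.of (fun y : (N.obj : Set X) => (P.obj (Uo y.1) : Type)) ⟨x, hxN⟩ p) := by
      refine congrArg (s.ι.app N) ?_
      exact ecMap_of P inf_le_left ⟨x, hxN, hxW⟩ p
    have hm2 : s.ι.app ⟨(hWx ⟨x, hxU⟩).choose, hWnerve⟩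
        ((nerveDiagram (EC P) 𝒰).map k2
        (DirectSum.of (fun y : ((N.obj ⊓ (hWx ⟨x, hxU⟩).choose : Opens X) : Set X) =>
          (P.obj (Uo y.1) : Type)) ⟨x, hxN, hxW⟩ p))
        = s.ι.app ⟨(hWx ⟨x, hxU⟩).choose, hWnerve⟩
          (DirectSum.of (fun y : (((hWx ⟨x, hxU⟩).choose : Opens X) : Set X) =>
            (P.obj (Uo y.1) : Type)) ⟨x, hxW⟩ p) := by
      refine congrArg _ ?_
      exact ecMap_of P inf_le_right ⟨x, hxN, hxW⟩ p
    have f1 := hm1.symm.trans e1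
    have f2 := hm2.symm.trans e2
    rw [hgleg]
    exact f1.trans f2.symm
  constructor
  refine
    { desc := fun s => AddCommGrpCat.ofHom (DirectSum.toAddMonoid (gleg s))
      fac := ?_
      uniq := ?_ }
  · intro s N
    refine AddCommGrpCat.hom_ext (DirectSum.addHom_ext fun x p => ?_)
    show (DirectSum.toAddMonoid (gleg s)) ((EC P).map (homOfLE (nerve_le h𝒰 N.2))
        (DirectSum.of (fun y : (N.obj : Set X) => (P.obj (Uo y.1) : Type)) x p))
      = s.ι.app N (DirectSum.of (fun y : (N.obj : Set X) => (P.obj (Uo y.1) : Type)) x p)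
    erw [EC_map_eq, ecMap_of, DirectSum.toAddMonoid_of]
    exact (key s N x.1 x.2 ((nerve_le h𝒰 N.2) x.2) p).symm
  · intro s mdesc hm
    refine AddCommGrpCat.hom_ext (DirectSum.addHom_ext fun x p => ?_)
    have hWnerve : (hWx x).choose ∈ nerveSet 𝒰 := (hWx x).choose_spec.1
    have hxW : x.1 ∈ (hWx x).choose := (hWx x).choose_spec.2
    have hsp : DirectSum.of (fun y : (U : Set X) => (P.obj (Uo y.1) : Type)) x p
        = (EC P).map (homOfLE (nerve_le h𝒰 hWnerve))
            (DirectSum.of (fun y : (((hWx x).choose : Opens X) : Set X) =>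
              (P.obj (Uo y.1) : Type)) ⟨x.1, hxW⟩ p) := by
      erw [EC_map_eq, ecMap_of]
    show mdesc (DirectSum.of (fun y : (U : Set X) => (P.obj (Uo y.1) : Type)) x p)
      = (DirectSum.toAddMonoid (gleg s))
          (DirectSum.of (fun y : (U : Set X) => (P.obj (Uo y.1) : Type)) x p)
    erw [DirectSum.toAddMonoid_of, hsp]
    have hfac := ConcreteCategory.congr_hom (hm ⟨(hWx x).choose, hWnerve⟩)
      (DirectSum.of (fun y : (((hWx x).choose : Opens X) : Set X) =>
        (P.obj (Uo y.1) : Type)) ⟨x.1, hxW⟩ p)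
    refine Eq.trans hfac ?_
    exact key s ⟨(hWx x).choose, hWnerve⟩ x.1 hxW x.2 p

lemma projective_flasque (P : Precosheaf X) (hP : IsCosheaf P)
    (hproj : IsProjectiveCosheaf P) :
    ∀ {V U : Opens X} (h : V ⟶ U), Function.Injective (P.map h) := by
  obtain ⟨s, hs⟩ := hproj P (EC P) hP (isCosheaf_EC P) (𝟙 P) (projEC P)
    (projEC_costalk_surj P)
  intro V U h a b hab
  have hsplit : ∀ (W : Opens X) (p : P.obj W), (projEC P).app W (s.app W p) = p := by
    intro W p
    have h1 := NatTrans.congr_app hs W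
    rw [NatTrans.comp_app, NatTrans.id_app] at h1
    exact ConcreteCategory.congr_hom h1 p
  have hnat : ∀ (p : P.obj V), (EC P).map h (s.app V p) = s.app U (P.map h p) :=
    fun p => (nat_apply s h p).symm
  have h2 : s.app V a = s.app V b := by
    refine EC_flasque P h ?_
    rw [hnat a, hnat b, hab]
  have h3 := congrArg ((projEC P).app V) h2
  rwa [hsplit, hsplit] at h3

end CoverCosheaf
/-- If `F` is a flasque cosheaf on a `T0` Alexandroff space (all structure maps are
injective), then its cosheaf homology, computed from any projective resolution by taking
homology of global sections, vanishes in all degrees `n ≥ 1`. -/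
theorem stmt_17 {X : Type} [TopologicalSpace X] [AlexandrovDiscrete X] [T0Space X]
    (F : Precosheaf X) (hF : IsCosheaf F)
    (hflasque : ∀ {U V : Opens X} (h : U ⟶ V), Function.Injective (F.map h)) :
    ∀ (R : ProjRes F) (n : ℕ),
      Function.Exact ((R.d (n + 1)).app (⊤ : Opens X)) ((R.d n).app (⊤ : Opens X)) := by
  intro R n
  classical
  -- basic consequences of the chain complex structure
  have hdd : ∀ (m : ℕ) (U : Opens X) (a : (R.P (m + 2)).obj U),
      (R.d m).app U ((R.d (m + 1)).app U a) = 0 := by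
    intro m U a
    have h1 := NatTrans.congr_app (R.dd m) U
    have h2 := ConcreteCategory.congr_hom h1 a
    rwa [NatTrans.comp_app, zero_app] at h2
  have hde : ∀ (U : Opens X) (a : (R.P 1).obj U),
      R.ε.app U ((R.d 0).app U a) = 0 := by
    intro U a
    have h1 := NatTrans.congr_app R.dε U
    have h2 := ConcreteCategory.congr_hom h1 a
    rwa [NatTrans.comp_app, zero_app] at h2
  -- the cokernel cosheaves and the induced maps
  have hCkCosheaf : ∀ m : ℕ, IsCosheaf (cokerF (R.d m)) :=
    fun m => isCosheaf_cokerF (R.d m) (R.cosheaf (m + 1)) (R.cosheaf m)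
  have hPfl : ∀ (m : ℕ) {V U : Opens X} (h : V ⟶ U), Function.Injective ((R.P m).map h) :=
    fun m => projective_flasque (R.P m) (R.cosheaf m) (R.projective m)
  -- costalk injectivity of the induced maps
  have hdbar_inj_costalk : ∀ (m : ℕ) (x : X),
      Function.Injective ((cokerDesc (R.d (m + 1)) (R.d m) (hdd m)).app (Uo x)) := by
    intro m x
    refine (injective_iff_map_eq_zero _).mpr ?_
    intro a ha
    refine QuotientAddGroup.induction_on a ?_ ha
    intro c hc
    have hc' : (R.d m).app (Uo x) c = 0 := hc
    obtain ⟨w, hw⟩ := (R.exact_d m x c).mp hc'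
    exact (mk_eq_zero_iff (R.d (m + 1)) (Uo x) c).mpr ⟨w, hw⟩
  have hεb_inj_costalk : ∀ x : X,
      Function.Injective ((cokerDesc (R.d 0) R.ε hde).app (Uo x)) := by
    intro x
    refine (injective_iff_map_eq_zero _).mpr ?_
    intro a ha
    refine QuotientAddGroup.induction_on a ?_ ha
    intro c hc
    have hc' : R.ε.app (Uo x) c = 0 := hc
    obtain ⟨w, hw⟩ := (R.exact_0 x c).mp hc'
    exact (mk_eq_zero_iff (R.d 0) (Uo x) c).mpr ⟨w, hw⟩
  -- the costalk kernel description for q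
  have hker : ∀ (m : ℕ) (x : X) (b : (R.P (m + 1)).obj (Uo x)),
      (qMor (R.d (m + 1))).app (Uo x) b = 0
        ↔ b ∈ ((cokerDesc (R.d (m + 2)) (R.d (m + 1)) (hdd (m + 1))).app (Uo x)).hom.range := by
    intro m x b
    constructor
    · intro hb
      obtain ⟨c, hc⟩ := (mk_eq_zero_iff (R.d (m + 1)) (Uo x) b).mp hb
      exact ⟨QuotientAddGroup.mk c, hc⟩
    · rintro ⟨a, rfl⟩
      refine QuotientAddGroup.induction_on a ?_
      intro c
      exact (mk_eq_zero_iff (R.d (m + 1)) (Uo x) _).mpr ⟨c, rfl⟩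
  have hβα : ∀ (m : ℕ) (V : Opens X) (a : (cokerF (R.d (m + 2))).obj V),
      (qMor (R.d (m + 1))).app V
        ((cokerDesc (R.d (m + 2)) (R.d (m + 1)) (hdd (m + 1))).app V a) = 0 := by
    intro m V a
    refine QuotientAddGroup.induction_on a ?_
    intro c
    exact (mk_eq_zero_iff (R.d (m + 1)) V _).mpr ⟨c, rfl⟩
  have hMid : ∀ (m : ℕ) (V : Opens X) (b : (R.P (m + 1)).obj V),
      (qMor (R.d (m + 1))).app V b = 0
        → b ∈ ((cokerDesc (R.d (m + 2)) (R.d (m + 1)) (hdd (m + 1))).app V).hom.range := by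
    intro m
    exact mid_exact _ _ (R.cosheaf (m + 1)) (hCkCosheaf (m + 1))
      (fun x => qMor_surjective (R.d (m + 1)) (Uo x)) (hker m)
  -- flasqueness of the cokernel cosheaves, by induction
  have hCkfl : ∀ (m : ℕ) {V U : Opens X} (h : V ⟶ U),
      Function.Injective ((cokerF (R.d m)).map h) := by
    intro m
    induction m with
    | zero =>
      -- use the induced map to F
      set zeroC : Precosheaf X := (Functor.const (Opens X)).obj (AddCommGrpCat.of PUnit)
        with hzeroC
      have hzsub : ∀ (V : Opens X), Subsingleton (zeroC.obj V) := by
        intro V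
        rw [hzeroC]
        exact inferInstanceAs (Subsingleton PUnit)
      set β0 : F ⟶ zeroC :=
        { app := fun V => 0
          naturality := by
            intro V U h
            have := hzsub U
            ext a
            exact Subsingleton.elim _ _ } with hβ0
      have hzfl : ∀ {V U : Opens X} (h : V ⟶ U), Function.Injective (zeroC.map h) := by
        intro V U h a b hab
        have := hzsub V
        exact Subsingleton.elim a b
      have hMid0 : ∀ (V : Opens X) (b : F.obj V),
          β0.app V b = 0 → b ∈ ((cokerDesc (R.d 0) R.ε hde).app V).hom.range := by
        intro V b _
        refine gen_induction F hF V (p := fun b => b ∈ ((cokerDesc (R.d 0) R.ε hde).app V).hom.range)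
          ⟨0, map_zero _⟩ (fun a b ha hb => add_mem ha hb) ?_ b
        intro x hx g
        obtain ⟨b', hb'⟩ := R.exact_ε x g
        refine ⟨(cokerF (R.d 0)).map (homOfLE (Uo_le hx)) (QuotientAddGroup.mk b'), ?_⟩
        have hnat := nat_apply (cokerDesc (R.d 0) R.ε hde) (homOfLE (Uo_le hx))
          (QuotientAddGroup.mk b' : (cokerF (R.d 0)).obj (Uo x))
        rw [hnat]
        rw [show (cokerDesc (R.d 0) R.ε hde).app (Uo x) (QuotientAddGroup.mk b')
          = R.ε.app (Uo x) b' from rfl, hb']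
      have hβα0 : ∀ (V : Opens X) (a : (cokerF (R.d 0)).obj V),
          β0.app V ((cokerDesc (R.d 0) R.ε hde).app V a) = 0 := by
        intro V a
        have := hzsub V
        exact Subsingleton.elim _ _
      have hεinj : ∀ U₀ : Opens X,
          Function.Injective ((cokerDesc (R.d 0) R.ε hde).app U₀) :=
        zorn_inj (cokerDesc (R.d 0) R.ε hde) β0 (hCkCosheaf 0) hF hzfl
          hεb_inj_costalk hβα0 hMid0
      intro V U h a b hab
      refine hεinj V ?_
      refine hflasque h ?_
      have h1 := nat_apply (cokerDesc (R.d 0) R.ε hde) h a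
      have h2 := nat_apply (cokerDesc (R.d 0) R.ε hde) h b
      rw [← h1, ← h2, hab]
    | succ k ih =>
      have hdinj : ∀ U₀ : Opens X,
          Function.Injective ((cokerDesc (R.d (k + 1)) (R.d k) (hdd k)).app U₀) :=
        zorn_inj (cokerDesc (R.d (k + 1)) (R.d k) (hdd k)) (qMor (R.d k))
          (hCkCosheaf (k + 1)) (R.cosheaf k) (fun {V U} h => ih h)
          (hdbar_inj_costalk k)
          (by
            intro V a
            refine QuotientAddGroup.induction_on a ?_
            intro c
            exact (mk_eq_zero_iff (R.d k) V _).mpr ⟨c, rfl⟩)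
          (by
            intro V b hb
            exact mid_exact _ _ (R.cosheaf k) (hCkCosheaf k)
              (fun x => qMor_surjective (R.d k) (Uo x))
              (fun x b => by
                constructor
                · intro hb0
                  obtain ⟨c, hc⟩ := (mk_eq_zero_iff (R.d k) (Uo x) b).mp hb0
                  exact ⟨QuotientAddGroup.mk c, hc⟩
                · rintro ⟨a, rfl⟩
                  refine QuotientAddGroup.induction_on a ?_
                  intro c
                  exact (mk_eq_zero_iff (R.d k) (Uo x) _).mpr ⟨c, rfl⟩) V b hb)
      intro V U h a b hab
      refine hdinj V ?_
      refine hPfl k h ?_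
      have h1 := nat_apply (cokerDesc (R.d (k + 1)) (R.d k) (hdd k)) h a
      have h2 := nat_apply (cokerDesc (R.d (k + 1)) (R.d k) (hdd k)) h b
      rw [← h1, ← h2, hab]
  -- the final chase at ⊤
  have hdinjTop : Function.Injective
      ((cokerDesc (R.d (n + 1)) (R.d n) (hdd n)).app (⊤ : Opens X)) :=
    zorn_inj (cokerDesc (R.d (n + 1)) (R.d n) (hdd n)) (qMor (R.d n))
      (hCkCosheaf (n + 1)) (R.cosheaf n) (fun {V U} h => hCkfl n h)
      (hdbar_inj_costalk n)
      (by
        intro V a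
        refine QuotientAddGroup.induction_on a ?_
        intro c
        exact (mk_eq_zero_iff (R.d n) V _).mpr ⟨c, rfl⟩)
      (by
        intro V b hb
        exact mid_exact _ _ (R.cosheaf n) (hCkCosheaf n)
          (fun x => qMor_surjective (R.d n) (Uo x))
          (fun x b => by
            constructor
            · intro hb0
              obtain ⟨c, hc⟩ := (mk_eq_zero_iff (R.d n) (Uo x) b).mp hb0
              exact ⟨QuotientAddGroup.mk c, hc⟩
            · rintro ⟨a, rfl⟩
              refine QuotientAddGroup.induction_on a ?_
              intro c
              exact (mk_eq_zero_iff (R.d n) (Uo x) _).mpr ⟨c, rfl⟩) V b hb)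
      (⊤ : Opens X)
  intro y
  constructor
  · intro hy
    have h1 : (cokerDesc (R.d (n + 1)) (R.d n) (hdd n)).app (⊤ : Opens X)
        (QuotientAddGroup.mk y) = 0 := by
      rw [show (cokerDesc (R.d (n + 1)) (R.d n) (hdd n)).app (⊤ : Opens X)
        (QuotientAddGroup.mk y) = (R.d n).app (⊤ : Opens X) y from rfl]
      exact hy
    have h2 : (QuotientAddGroup.mk y
        : ((R.P (n + 1)).obj ⊤) ⧸ ((R.d (n + 1)).app (⊤ : Opens X)).hom.range) = 0 := by
      have h3 : (cokerDesc (R.d (n + 1)) (R.d n) (hdd n)).app (⊤ : Opens X) 0 = 0 :=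
        map_zero _
      exact hdinjTop (h1.trans h3.symm)
    obtain ⟨w, hw⟩ := (mk_eq_zero_iff (R.d (n + 1)) ⊤ y).mp h2
    exact ⟨w, hw⟩
  · rintro ⟨w, rfl⟩
    exact hdd n ⊤ w
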